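/- Let p > 1, q > 1 with 1/p + 1/q = 1, set r = min{p, 2}, and let (ξ_n)_{n≥1} be a sequence of real random variables with b = sup_{n≥1} τ_{φ_p}(ξ_n) < ∞, b > 0. Suppose that for every natural number n, τ_{φ_p}(∑_{i=1}^n ξ_i)^r ≤ ∑_{i=1}^n τ_{φ_p}(ξ_i)^r. Then for every s with 0 < s < r, every ε > 0 and every natural number n with n > (b/ε)^{(1/s − 1/r)^{−1}}, P(|∑_{i=1}^n ξ_i| ≥ n^{1/s} ε) ≤ 2 exp(−(n^{q(1/s − 1/r)} (1/q) (ε/b)^q − 1/q + 1/2)). -/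

import Mathlib

open MeasureTheory Real Filter

/-- The quadratic `N`-function `φ_p`: `φ_p(x) = x²/2` for `|x| ≤ 1` and
`φ_p(x) = (1/p)|x|^p - 1/p + 1/2` for `|x| > 1`. -/
noncomputable def phi (p : ℝ) (x : ℝ) : ℝ :=
  if |x| ≤ 1 then x ^ 2 / 2 else (1 / p) * |x| ^ p - 1 / p + 1 / 2

/-- The set of admissible constants in the definition of the `φ`-subgaussian standard:
`{a ≥ 0 : ∀ λ, ln E exp(λξ) ≤ φ(aλ)}` (the exponentiated form of the inequality also
encodes finiteness of `E exp(λξ)`). -/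
def subSet {Ω : Type*} [MeasurableSpace Ω] (μ : Measure Ω) (φ : ℝ → ℝ) (ξ : Ω → ℝ) :
    Set ℝ :=
  {a | 0 ≤ a ∧ ∀ l : ℝ,
    ∫⁻ ω, ENNReal.ofReal (Real.exp (l * ξ ω)) ∂μ ≤ ENNReal.ofReal (Real.exp (φ (a * l)))}

/-- The `φ`-subgaussian standard (norm) `τ_φ(ξ)`. -/
noncomputable def tau {Ω : Type*} [MeasurableSpace Ω] (μ : Measure Ω) (φ : ℝ → ℝ)
    (ξ : Ω → ℝ) : ℝ :=
  sInf (subSet μ φ ξ)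

lemma phi_neg (p x : ℝ) : phi p (-x) = phi p x := by
  simp [phi, neg_sq]

lemma phi_mono {p : ℝ} (hp : 0 < p) {x y : ℝ} (h : |x| ≤ |y|) : phi p x ≤ phi p y := by
  unfold phi
  have hx0 : (0:ℝ) ≤ |x| := abs_nonneg x
  by_cases hy : |y| ≤ 1
  · rw [if_pos (h.trans hy), if_pos hy]
    have : x ^ 2 ≤ y ^ 2 := by
      rw [← sq_abs x, ← sq_abs y]; exact pow_le_pow_left₀ hx0 h 2
    linarith
  · rw [if_neg hy]
    push_neg at hy
    have h1 : (1:ℝ) ≤ |y| ^ p := Real.one_le_rpow hy.le hp.le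
    have h2 : (1:ℝ)/p * 1 ≤ 1/p * |y| ^ p :=
      mul_le_mul_of_nonneg_left h1 (by positivity)
    by_cases hx : |x| ≤ 1
    · rw [if_pos hx]
      have hx2 : x ^ 2 ≤ 1 := by
        rw [← sq_abs x]; exact pow_le_one₀ hx0 hx
      linarith
    · rw [if_neg hx]
      have h3 : |x| ^ p ≤ |y| ^ p := Real.rpow_le_rpow hx0 h hp.le
      have := mul_le_mul_of_nonneg_left h3 (show (0:ℝ) ≤ 1/p by positivity)
      linarith

lemma phi_continuous {p : ℝ} (hp : 0 < p) : Continuous (phi p) := by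
  unfold phi
  apply Continuous.if_le
  · exact (continuous_pow 2).div_const 2
  · exact ((continuous_const.mul (continuous_abs.rpow_const fun x => Or.inr hp.le)).sub
      continuous_const).add continuous_const
  · exact continuous_abs
  · exact continuous_const
  · intro x hx
    rw [← sq_abs, hx, Real.one_rpow]
    ring

lemma subSet_closed {Ω : Type*} [MeasurableSpace Ω] (μ : Measure Ω) {p : ℝ} (hp : 0 < p)
    (ξ : Ω → ℝ) : IsClosed (subSet μ (phi p) ξ) := by
  have heq : subSet μ (phi p) ξ = Set.Ici 0 ∩ ⋂ l : ℝ,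
      {a | ∫⁻ ω, ENNReal.ofReal (Real.exp (l * ξ ω)) ∂μ ≤
        ENNReal.ofReal (Real.exp (phi p (a * l)))} := by
    ext a
    simp only [subSet, Set.mem_setOf_eq, Set.mem_inter_iff, Set.mem_Ici, Set.mem_iInter]
  rw [heq]
  refine isClosed_Ici.inter (isClosed_iInter fun l => ?_)
  have hc : Continuous fun a : ℝ => ENNReal.ofReal (Real.exp (phi p (a * l))) :=
    ENNReal.continuous_ofReal.comp
      (Real.continuous_exp.comp ((phi_continuous hp).comp (continuous_mul_right l)))
  exact isClosed_le continuous_const hc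

lemma subSet_mem_of_le {Ω : Type*} [MeasurableSpace Ω] {μ : Measure Ω} {p : ℝ} (hp : 0 < p)
    {ξ : Ω → ℝ} {a a' : ℝ} (ha : a ∈ subSet μ (phi p) ξ) (h : a ≤ a') :
    a' ∈ subSet μ (phi p) ξ := by
  refine ⟨ha.1.trans h, fun l => (ha.2 l).trans ?_⟩
  refine ENNReal.ofReal_le_ofReal (Real.exp_le_exp.mpr (phi_mono hp ?_))
  rw [abs_mul, abs_mul]
  exact mul_le_mul_of_nonneg_right
    (by rwa [abs_of_nonneg ha.1, abs_of_nonneg (ha.1.trans h)]) (abs_nonneg l)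

lemma tau_mem_subSet {Ω : Type*} [MeasurableSpace Ω] (μ : Measure Ω) {p : ℝ} (hp : 0 < p)
    (ξ : Ω → ℝ) (h : (subSet μ (phi p) ξ).Nonempty) :
    tau μ (phi p) ξ ∈ subSet μ (phi p) ξ :=
  (subSet_closed μ hp ξ).csInf_mem h ⟨0, fun _ ha => ha.1⟩

lemma chernoff_aux {Ω : Type*} [MeasurableSpace Ω] (μ : Measure Ω) {S : Ω → ℝ}
    (hS : Measurable S) {l t C : ℝ} (hl : 0 < l)
    (hint : ∫⁻ ω, ENNReal.ofReal (Real.exp (l * S ω)) ∂μ ≤ ENNReal.ofReal (Real.exp C)) :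
    μ {ω | t ≤ S ω} ≤ ENNReal.ofReal (Real.exp (C - l * t)) := by
  have hmeas : AEMeasurable (fun ω => ENNReal.ofReal (Real.exp (l * S ω))) μ :=
    (ENNReal.measurable_ofReal.comp (Real.measurable_exp.comp (hS.const_mul l))).aemeasurable
  have key := mul_meas_ge_le_lintegral₀ hmeas (ENNReal.ofReal (Real.exp (l * t)))
  have hsub : {ω | t ≤ S ω} ⊆
      {ω | ENNReal.ofReal (Real.exp (l * t)) ≤ ENNReal.ofReal (Real.exp (l * S ω))} :=
    fun ω hω => ENNReal.ofReal_le_ofReal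
      (Real.exp_le_exp.mpr (mul_le_mul_of_nonneg_left hω hl.le))
  have h1 : ENNReal.ofReal (Real.exp (l * t)) * μ {ω | t ≤ S ω} ≤
      ENNReal.ofReal (Real.exp C) :=
    le_trans (mul_le_mul_right (measure_mono hsub) _) (key.trans hint)
  have hne : ENNReal.ofReal (Real.exp (l * t)) ≠ 0 := by
    simp [ENNReal.ofReal_eq_zero, not_le, Real.exp_pos]
  rw [Real.exp_sub, ENNReal.ofReal_div_of_pos (Real.exp_pos _),
    ENNReal.le_div_iff_mul_le (Or.inl hne) (Or.inl ENNReal.ofReal_ne_top), mul_comm]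
  exact h1

/-- Quantitative tail bound of the Marcinkiewicz–Zygmund type proposition: with
`b = sup_{n≥1} τ_{φ_p}(ξ_n) > 0` and the norm inequality (2), one has for all
`0 < s < r`, `ε > 0` and `n > (b/ε)^{(1/s − 1/r)⁻¹}` that
`P(|∑_{i=1}^n ξ_i| ≥ n^{1/s} ε) ≤ 2 exp(−(n^{q(1/s−1/r)}(1/q)(ε/b)^q − 1/q + 1/2))`. -/
theorem tail_bound_marcinkiewicz_zygmund
    {Ω : Type*} [MeasurableSpace Ω] (μ : Measure Ω) [IsProbabilityMeasure μ]
    (p q : ℝ) (hp : 1 < p) (hq : 1 < q) (hpq : 1 / p + 1 / q = 1)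
    (r : ℝ) (hr : r = min p 2)
    (ξ : ℕ → Ω → ℝ) (hmeas : ∀ n, Measurable (ξ n))
    (hsub : ∀ n, (subSet μ (phi p) (ξ n)).Nonempty)
    (b : ℝ) (hb : IsLUB {x : ℝ | ∃ n : ℕ, 1 ≤ n ∧ x = tau μ (phi p) (ξ n)} b)
    (hbpos : 0 < b)
    (hsubsum : ∀ n : ℕ, 1 ≤ n →
      (subSet μ (phi p) (fun ω => ∑ i ∈ Finset.Icc 1 n, ξ i ω)).Nonempty)
    (hτ : ∀ n : ℕ, 1 ≤ n →
      tau μ (phi p) (fun ω => ∑ i ∈ Finset.Icc 1 n, ξ i ω) ^ r ≤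
        ∑ i ∈ Finset.Icc 1 n, tau μ (phi p) (ξ i) ^ r)
    (s : ℝ) (hs0 : 0 < s) (hsr : s < r)
    (ε : ℝ) (hε : 0 < ε)
    (n : ℕ) (hn1 : 1 ≤ n) (hn : (b / ε) ^ ((1 / s - 1 / r)⁻¹) < (n : ℝ)) :
    μ {ω | (n : ℝ) ^ (1 / s) * ε ≤ |∑ i ∈ Finset.Icc 1 n, ξ i ω|} ≤
      ENNReal.ofReal (2 * Real.exp
        (-((n : ℝ) ^ (q * (1 / s - 1 / r)) * (1 / q) * (ε / b) ^ q - 1 / q + 1 / 2))) := by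
  have hp0 : (0:ℝ) < p := lt_trans one_pos hp
  have hq0 : (0:ℝ) < q := lt_trans one_pos hq
  have hr1 : 1 < r := by rw [hr]; exact lt_min hp one_lt_two
  have hr0 : 0 < r := lt_trans one_pos hr1
  have hn0 : (0:ℝ) < n := by exact_mod_cast hn1
  set S : Ω → ℝ := fun ω => ∑ i ∈ Finset.Icc 1 n, ξ i ω with hS_def
  have hSmeas : Measurable S := Finset.measurable_sum _ fun i _ => hmeas i
  -- bound on tau of individual variables
  have hτb : ∀ i : ℕ, 1 ≤ i → tau μ (phi p) (ξ i) ≤ b := fun i hi => hb.1 ⟨i, hi, rfl⟩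
  have hτ0 : ∀ i : ℕ, 0 ≤ tau μ (phi p) (ξ i) := fun i =>
    le_csInf (hsub i) fun a ha => ha.1
  -- a := n^{1/r} * b is admissible for S
  set a : ℝ := (n:ℝ) ^ (1/r) * b with ha_def
  have ha_pos : 0 < a := mul_pos (Real.rpow_pos_of_pos hn0 _) hbpos
  have hbr : ∑ i ∈ Finset.Icc 1 n, tau μ (phi p) (ξ i) ^ r ≤ (n:ℝ) * b ^ r := by
    calc ∑ i ∈ Finset.Icc 1 n, tau μ (phi p) (ξ i) ^ r
        ≤ ∑ _i ∈ Finset.Icc 1 n, b ^ r := Finset.sum_le_sum fun i hi =>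
          Real.rpow_le_rpow (hτ0 i) (hτb i (Finset.mem_Icc.mp hi).1) hr0.le
      _ = (n:ℝ) * b ^ r := by
          rw [Finset.sum_const, Nat.card_Icc]; simp [nsmul_eq_mul]
  have har : a ^ r = (n:ℝ) * b ^ r := by
    rw [ha_def, Real.mul_rpow (by positivity) hbpos.le, ← Real.rpow_mul hn0.le,
      one_div, inv_mul_cancel₀ hr0.ne', Real.rpow_one]
  have hτS0 : 0 ≤ tau μ (phi p) S := le_csInf (hsubsum n hn1) fun x hx => hx.1
  have hτS : tau μ (phi p) S ≤ a := by
    rw [← Real.rpow_le_rpow_iff hτS0 ha_pos.le hr0, har]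
    exact (hτ n hn1).trans hbr
  have hamem : a ∈ subSet μ (phi p) S :=
    subSet_mem_of_le hp0 (tau_mem_subSet μ hp0 S (hsubsum n hn1)) hτS
  -- the threshold
  set t : ℝ := (n:ℝ) ^ (1/s) * ε with ht_def
  have ht_pos : 0 < t := mul_pos (Real.rpow_pos_of_pos hn0 _) hε
  set c : ℝ := 1/s - 1/r with hc_def
  have hc : 0 < c := sub_pos.mpr (one_div_lt_one_div_of_lt hs0 hsr)
  set u : ℝ := t / a with hu_def
  have hu_pos : 0 < u := div_pos ht_pos ha_pos
  have hu_eq : u = (n:ℝ) ^ c * (ε / b) := by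
    rw [hu_def, ht_def, ha_def, hc_def, Real.rpow_sub hn0]
    field_simp
  have hu1 : 1 < u := by
    have h1 : b / ε < (n:ℝ) ^ c := by
      have h2 := Real.rpow_lt_rpow (by positivity) hn hc
      rwa [← Real.rpow_mul (by positivity), inv_mul_cancel₀ hc.ne', Real.rpow_one] at h2
    have h3 : b < (n:ℝ) ^ c * ε := (div_lt_iff₀ hε).mp h1
    rw [hu_eq, mul_div_assoc']
    exact (one_lt_div hbpos).mpr h3
  -- Chernoff parameter
  set l : ℝ := u ^ (q - 1) / a with hl_def
  have hl0 : 0 < l := div_pos (Real.rpow_pos_of_pos hu_pos _) ha_pos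
  have hal : a * l = u ^ (q - 1) := by
    rw [hl_def, mul_div_cancel₀ _ ha_pos.ne']
  have hal1 : 1 < u ^ (q - 1) :=
    Real.one_lt_rpow_iff_of_pos hu_pos |>.mpr (Or.inl ⟨hu1, by linarith⟩)
  have hqp : (q - 1) * p = q := by
    have hpq' : q + p = p * q := by
      field_simp at hpq
      linarith
    linear_combination hpq'.symm
  have hphi : phi p (a * l) = 1/p * u ^ q - 1/p + 1/2 := by
    rw [hal, phi, if_neg (not_le.mpr (by rwa [abs_of_pos (lt_trans one_pos hal1)])),
      abs_of_pos (lt_trans one_pos hal1), ← Real.rpow_mul hu_pos.le, hqp]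
  have hlt : l * t = u ^ q := by
    have ht_eq : t = u * a := by rw [hu_def, div_mul_cancel₀ _ ha_pos.ne']
    have h5 : u ^ (q - 1) * u = u ^ q := by
      have h6 := (Real.rpow_add hu_pos (q - 1) 1).symm
      rw [Real.rpow_one] at h6
      rw [h6]
      congr 1
      ring
    calc l * t = u ^ (q - 1) / a * (u * a) := by rw [hl_def, ht_eq]
      _ = u ^ (q - 1) * u := by field_simp [ha_pos.ne']
      _ = u ^ q := h5
  -- the exponent
  have hE : phi p (a * l) - l * t =
      -((n : ℝ) ^ (q * (1 / s - 1 / r)) * (1 / q) * (ε / b) ^ q - 1 / q + 1 / 2) := by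
    rw [hphi, hlt]
    have huq : u ^ q = (n : ℝ) ^ (q * (1 / s - 1 / r)) * (ε / b) ^ q := by
      rw [hu_eq, Real.mul_rpow (by positivity) (by positivity), mul_comm q c,
        Real.rpow_mul hn0.le, hc_def]
    rw [huq]
    have h1p : 1/p = 1 - 1/q := by linarith
    rw [h1p]; ring
  -- Chernoff on both tails
  have hside1 : μ {ω | t ≤ S ω} ≤ ENNReal.ofReal (Real.exp (phi p (a*l) - l * t)) :=
    chernoff_aux μ hSmeas hl0 (hamem.2 l)
  have hside2 : μ {ω | t ≤ -S ω} ≤ ENNReal.ofReal (Real.exp (phi p (a*l) - l * t)) := by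
    have hint : ∫⁻ ω, ENNReal.ofReal (Real.exp (l * (-(S ω)))) ∂μ ≤
        ENNReal.ofReal (Real.exp (phi p (a * l))) := by
      have h2 := hamem.2 (-l)
      rw [mul_neg, phi_neg] at h2
      refine le_trans (le_of_eq (lintegral_congr fun ω => ?_)) h2
      rw [show l * -(S ω) = -l * S ω by ring]
    exact chernoff_aux μ hSmeas.neg hl0 hint
  have hunion : {ω | t ≤ |S ω|} ⊆ {ω | t ≤ S ω} ∪ {ω | t ≤ -S ω} := by
    intro ω hω
    simp only [Set.mem_setOf_eq] at hω ⊢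
    rcases le_abs.mp hω with h | h
    · exact Or.inl h
    · exact Or.inr h
  calc μ {ω | (n : ℝ) ^ (1 / s) * ε ≤ |∑ i ∈ Finset.Icc 1 n, ξ i ω|}
      = μ {ω | t ≤ |S ω|} := rfl
    _ ≤ μ ({ω | t ≤ S ω} ∪ {ω | t ≤ -S ω}) := measure_mono hunion
    _ ≤ μ {ω | t ≤ S ω} + μ {ω | t ≤ -S ω} := measure_union_le _ _
    _ ≤ ENNReal.ofReal (Real.exp (phi p (a*l) - l * t)) +
        ENNReal.ofReal (Real.exp (phi p (a*l) - l * t)) := add_le_add hside1 hside2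
    _ = ENNReal.ofReal (2 * Real.exp (phi p (a*l) - l * t)) := by
        rw [← ENNReal.ofReal_add (Real.exp_nonneg _) (Real.exp_nonneg _), two_mul]
    _ = ENNReal.ofReal (2 * Real.exp
        (-((n : ℝ) ^ (q * (1 / s - 1 / r)) * (1 / q) * (ε / b) ^ q - 1 / q + 1 / 2))) := by
        rw [hE]
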